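/- Let A be a commutative ring, D : A → A a derivation, s ≥ 1, r ≥ 0, p ≥ 0. Let a_0, …, a_r be s×s matrices over A, let G_1, …, G_p, γ_1, …, γ_p, Q, γ ∈ A^s, and let f_1, …, f_p, g_1, …, g_p ∈ A satisfy D(f_β) = γ_β·Q and D(g_β) = G_β·γ for β = 1, …, p. Set R(Q) := Σ_{i=0}^r a_i·D^i(Q) + Σ_{β=1}^p f_β·G_β ∈ A^s and R†(γ) := Σ_{i=0}^r (−1)^i D^i(a_iᵀ·γ) − Σ_{β=1}^p g_β·γ_β ∈ A^s. Then R(Q)·γ − Q·R†(γ) = D( Σ_{i=1}^r Σ_{j=0}^{i−1} ((−1)^j D^j(a_iᵀ·γ)) · D^{i−j−1}(Q) + Σ_{β=1}^p g_β·f_β ). (This is the key identity expressing that, for a weakly nonlocal operator R = Σ_i a_i D^i + Σ_β G_β ⊗ D^{−1}∘γ_β, the element R(Q)·γ − Q·R†(γ) is a total derivative with an explicit antiderivative.) -/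

import Mathlib

section Aux

variable {A : Type*} [CommRing A] {D : A → A}

private lemma myD0 (hadd : ∀ a b : A, D (a + b) = D a + D b) : D 0 = 0 := by
  have h : D 0 = D 0 + D 0 := by simpa using hadd 0 0
  exact (left_eq_add.mp h)

private lemma myDsum (hadd : ∀ a b : A, D (a + b) = D a + D b)
    {ι : Type*} (T : Finset ι) (F : ι → A) :
    D (∑ x ∈ T, F x) = ∑ x ∈ T, D (F x) := by
  classical
  induction T using Finset.induction with
  | empty => simpa using myD0 hadd
  | insert _ _ h ih => rw [Finset.sum_insert h, hadd, ih, Finset.sum_insert h]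

private lemma myD1 (hleib : ∀ a b : A, D (a * b) = a * D b + b * D a) : D 1 = 0 := by
  have h : D 1 = D 1 + D 1 := by simpa using hleib 1 1
  exact (left_eq_add.mp h)

private lemma myDneg (hadd : ∀ a b : A, D (a + b) = D a + D b) (x : A) :
    D (-x) = - D x := by
  have h : D (-x) + D x = 0 := by
    rw [← hadd]; simpa using myD0 hadd
  exact eq_neg_of_add_eq_zero_left h

private lemma myDpow (hadd : ∀ a b : A, D (a + b) = D a + D b)
    (hleib : ∀ a b : A, D (a * b) = a * D b + b * D a) (j : ℕ) :
    D ((-1 : A) ^ j) = 0 := by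
  rcases Nat.even_or_odd j with h | h
  · rw [h.neg_one_pow]; exact myD1 hleib
  · rw [h.neg_one_pow, myDneg hadd]; simp [myD1 hleib]

private lemma myDconstmul (hadd : ∀ a b : A, D (a + b) = D a + D b)
    (hleib : ∀ a b : A, D (a * b) = a * D b + b * D a) (j : ℕ) (w : A) :
    D ((-1 : A) ^ j * w) = (-1 : A) ^ j * D w := by
  rw [hleib, myDpow hadd hleib]; ring

private lemma key (hadd : ∀ a b : A, D (a + b) = D a + D b)
    (hleib : ∀ a b : A, D (a * b) = a * D b + b * D a) (i : ℕ) (u v : A) :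
    u * D^[i] v - (-1 : A) ^ i * D^[i] u * v
      = D (∑ j ∈ Finset.range i, (-1 : A) ^ j * D^[j] u * D^[i - j - 1] v) := by
  induction i generalizing v with
  | zero => simp [myD0 hadd]
  | succ i ih =>
    have hsum : ∀ j ∈ Finset.range i,
        (-1 : A) ^ j * D^[j] u * D^[i + 1 - j - 1] v
          = (-1 : A) ^ j * D^[j] u * D^[i - j - 1] (D v) := by
      intro j hj
      have hj' : j < i := Finset.mem_range.mp hj
      have : i + 1 - j - 1 = (i - j - 1) + 1 := by omega
      rw [this, Function.iterate_succ_apply]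
    rw [Finset.sum_range_succ, hadd, Finset.sum_congr rfl hsum, ← ih (D v)]
    have h1 : i + 1 - i - 1 = 0 := by omega
    rw [h1, Function.iterate_zero_apply, mul_assoc ((-1:A)^i) (D^[i] u) v, myDconstmul hadd hleib, hleib,
      Function.iterate_succ_apply' D i u, Function.iterate_succ_apply D i v]
    ring

end Aux

/-- Let `A` be a commutative ring, `D : A → A` a derivation, `s ≥ 1`,
`r, p ≥ 0`. Let `a_0, …, a_r` be `s×s` matrices over `A`, let
`G_1, …, G_p, γ_1, …, γ_p, Q, γ ∈ A^s`, and let `f_β, g_β ∈ A` satisfy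
`D(f_β) = γ_β·Q` and `D(g_β) = G_β·γ`. With
`R(Q) = Σ_i a_i·D^i(Q) + Σ_β f_β·G_β` and
`R†(γ) = Σ_i (−1)^i D^i(a_iᵀ·γ) − Σ_β g_β·γ_β`, one has
`R(Q)·γ − Q·R†(γ) = D( Σ_{i=1}^r Σ_{j=0}^{i−1} ((−1)^j D^j(a_iᵀ·γ))·D^{i−j−1}(Q) + Σ_β g_β·f_β )`. -/
theorem stmt_4 {A : Type*} [CommRing A] (D : A → A)
    (hadd : ∀ a b : A, D (a + b) = D a + D b)
    (hleib : ∀ a b : A, D (a * b) = a * D b + b * D a)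
    (s r p : ℕ) (hs : 1 ≤ s)
    (a : ℕ → Matrix (Fin s) (Fin s) A)
    (G γv : Fin p → Fin s → A) (Q γ : Fin s → A)
    (f g : Fin p → A)
    (hf : ∀ β, D (f β) = ∑ k, γv β k * Q k)
    (hg : ∀ β, D (g β) = ∑ k, G β k * γ k)
    (RQ : Fin s → A)
    (hRQ : ∀ k, RQ k = (∑ i ∈ Finset.range (r + 1), ∑ l, a i k l * D^[i] (Q l))
        + ∑ β, f β * G β k)
    (Rd : Fin s → A)
    (hRd : ∀ k, Rd k = (∑ i ∈ Finset.range (r + 1),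
          (-1 : A) ^ i * D^[i] (∑ l, a i l k * γ l))
        - ∑ β, g β * γv β k) :
    (∑ k, RQ k * γ k) - (∑ k, Q k * Rd k)
      = D ((∑ i ∈ Finset.range (r + 1), ∑ j ∈ Finset.range i, ∑ k,
            ((-1 : A) ^ j * D^[j] (∑ l, a i l k * γ l)) * D^[i - j - 1] (Q k))
          + ∑ β, g β * f β) := by
  classical
  set b : ℕ → Fin s → A := fun i k => ∑ l, a i l k * γ l with hb
  -- simplify LHS pieces
  have h1 : (∑ k, RQ k * γ k)
      = (∑ i ∈ Finset.range (r + 1), ∑ k, b i k * D^[i] (Q k))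
        + ∑ β, f β * D (g β) := by
    simp only [hRQ, add_mul, Finset.sum_add_distrib, Finset.sum_mul]
    congr 1
    · rw [Finset.sum_comm]
      refine Finset.sum_congr rfl fun i _ => ?_
      rw [Finset.sum_comm]
      refine Finset.sum_congr rfl fun k _ => ?_
      rw [hb]
      simp only [Finset.sum_mul]
      exact Finset.sum_congr rfl fun l _ => by ring
    · rw [Finset.sum_comm]
      refine Finset.sum_congr rfl fun β _ => ?_
      rw [hg, Finset.mul_sum]
      exact Finset.sum_congr rfl fun k _ => by ring
  have h2 : (∑ k, Q k * Rd k)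
      = (∑ i ∈ Finset.range (r + 1),
          ∑ k, (-1 : A) ^ i * D^[i] (b i k) * Q k)
        - ∑ β, g β * D (f β) := by
    simp only [hRd, mul_sub, Finset.sum_sub_distrib, Finset.mul_sum]
    congr 1
    · rw [Finset.sum_comm]
      exact Finset.sum_congr rfl fun i _ =>
        Finset.sum_congr rfl fun k _ => by rw [hb]; ring
    · rw [Finset.sum_comm]
      refine Finset.sum_congr rfl fun β _ => ?_
      rw [hf, Finset.mul_sum]
      exact Finset.sum_congr rfl fun k _ => by ring
  rw [h1, h2]
  have h3 : D ((∑ i ∈ Finset.range (r + 1), ∑ j ∈ Finset.range i, ∑ k,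
        ((-1 : A) ^ j * D^[j] (b i k)) * D^[i - j - 1] (Q k))
        + ∑ β, g β * f β)
      = (∑ i ∈ Finset.range (r + 1), ∑ k,
          (b i k * D^[i] (Q k) - (-1 : A) ^ i * D^[i] (b i k) * Q k))
        + ∑ β, (g β * D (f β) + f β * D (g β)) := by
    rw [hadd, myDsum hadd, myDsum hadd]
    congr 1
    · refine Finset.sum_congr rfl fun i _ => ?_
      rw [Finset.sum_comm, myDsum hadd]
      refine Finset.sum_congr rfl fun k _ => ?_
      rw [← key hadd hleib i (b i k) (Q k)]
    · exact Finset.sum_congr rfl fun β _ => hleib (g β) (f β)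
  rw [h3]
  simp only [Finset.sum_sub_distrib, Finset.sum_add_distrib]
  ring
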